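/- Let 1 ≤ p < ∞ and suppose sup_{x,y∈U_i} m_w(x,y) ≤ C_m for all i ∈ I, where m_w(x,y) = max(w(x)/w(y), w(y)/w(x)). Then there exist constants 0 < c ≤ C < ∞, depending only on N, C_m and p, such that for every sequence (λ_i)_{i∈I} of complex numbers (with both sides possibly infinite): c (Σ_{i∈I} |λ_i|^p b_p(i)^p)^{1/p} ≤ ( ∫_X (Σ_{i∈I} |λ_i| χ_{U_i}(y))^p w(y)^p dμ(y) )^{1/p} ≤ C (Σ_{i∈I} |λ_i|^p b_p(i)^p)^{1/p}, where b_p(i) = μ(U_i)^{1/p} w̃(i) and w̃(i) = sup_{x∈U_i} w(x). (Theorem 5.2(c), flat sequence space: (L^p_w)^♭ = ℓ^p_{b_p} with equivalent norms.) -/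

import Mathlib

open MeasureTheory
open scoped ENNReal NNReal

private lemma sum_rpow_le_rpow_sum {I : Type*} (s : Finset I) (g : I → ℝ≥0∞) {p : ℝ}
    (hp : 1 ≤ p) : ∑ i ∈ s, g i ^ p ≤ (∑ i ∈ s, g i) ^ p := by
  induction s using Finset.cons_induction with
  | empty => simp [ENNReal.zero_rpow_of_pos (lt_of_lt_of_le one_pos hp)]
  | cons a s ha ih =>
    rw [Finset.sum_cons, Finset.sum_cons]
    exact le_trans (add_le_add_right ih _) (ENNReal.add_rpow_le_rpow_add _ _ hp)

private lemma tsum_rpow_le_rpow_tsum {I : Type*} [Countable I] (g : I → ℝ≥0∞) {p : ℝ}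
    (hp : 1 ≤ p) : ∑' i, g i ^ p ≤ (∑' i, g i) ^ p := by
  rw [ENNReal.tsum_eq_iSup_sum]
  refine iSup_le fun s => le_trans (sum_rpow_le_rpow_sum s g hp) ?_
  exact ENNReal.rpow_le_rpow (ENNReal.sum_le_tsum s) (le_trans zero_le_one hp)

/-- **Theorem 5.2(c), flat sequence space.** `(L^p_w)^♭ = ℓ^p_{b_p}` with equivalent
norms, where `b_p(i) = μ(U_i)^{1/p} w̃(i)` and `w̃(i) = sup_{x ∈ U_i} w(x)`. -/
theorem stmt_2
    {X : Type*} [MeasurableSpace X] (μ : Measure X)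
    {I : Type*} [Countable I] (U : I → Set X)
    (hUmeas : ∀ i, MeasurableSet (U i))
    (hUpos : ∀ i, 0 < μ (U i)) (hUfin : ∀ i, μ (U i) < ∞)
    (hcov : ∀ x : X, ∃ i, x ∈ U i)
    (N : ℕ) (hN : ∀ x : X, {i : I | x ∈ U i}.encard ≤ N)
    (w : X → ℝ) (hw : ∀ x, 0 < w x) (hwm : Measurable w)
    (p : ℝ) (hp : 1 ≤ p)
    (Cm : ℝ) (hCm : ∀ i, ∀ x ∈ U i, ∀ y ∈ U i, max (w x / w y) (w y / w x) ≤ Cm) :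
    ∃ c C : ℝ≥0∞, 0 < c ∧ c ≤ C ∧ C < ∞ ∧ ∀ lam : I → ℂ,
      c * (∑' i, (‖lam i‖₊ : ℝ≥0∞) ^ p
            * (μ (U i) ^ (1/p) * ⨆ x ∈ U i, ENNReal.ofReal (w x)) ^ p) ^ (1/p)
        ≤ (∫⁻ y, (∑' i, (‖lam i‖₊ : ℝ≥0∞) * (U i).indicator (fun _ => (1 : ℝ≥0∞)) y) ^ p
            * ENNReal.ofReal (w y) ^ p ∂μ) ^ (1/p)
      ∧ (∫⁻ y, (∑' i, (‖lam i‖₊ : ℝ≥0∞) * (U i).indicator (fun _ => (1 : ℝ≥0∞)) y) ^ p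
            * ENNReal.ofReal (w y) ^ p ∂μ) ^ (1/p)
        ≤ C * (∑' i, (‖lam i‖₊ : ℝ≥0∞) ^ p
            * (μ (U i) ^ (1/p) * ⨆ x ∈ U i, ENNReal.ofReal (w x)) ^ p) ^ (1/p) := by
  classical
  have hp0 : (0:ℝ) < p := lt_of_lt_of_le one_pos hp
  have hp0' : p ≠ 0 := ne_of_gt hp0
  have hq0 : (0:ℝ) < 1/p := by positivity
  rcases isEmpty_or_nonempty I with hI | hI
  · -- empty index set: everything is zero
    refine ⟨1, 1, one_pos, le_rfl, ENNReal.one_lt_top, fun lam => ?_⟩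
    have h0 : ∀ g : I → ℝ≥0∞, ∑' i, g i = 0 := fun g => by
      rw [ENNReal.tsum_eq_zero]; exact fun i => (hI.false i).elim
    simp only [h0, ENNReal.zero_rpow_of_pos hp0, zero_mul, lintegral_zero,
      ENNReal.zero_rpow_of_pos hq0, mul_zero, le_refl, and_self]
  -- nonempty case
  obtain ⟨i0⟩ := hI
  obtain ⟨x0, hx0⟩ : (U i0).Nonempty := by
    rw [Set.nonempty_iff_ne_empty]
    intro h
    have := hUpos i0
    rw [h, measure_empty] at this
    exact lt_irrefl _ this
  have hCm1 : (1:ℝ) ≤ Cm := by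
    have := hCm i0 x0 hx0 x0 hx0
    rw [div_self (hw x0).ne', max_self] at this
    exact this
  have hN1 : 1 ≤ N := by
    have h1 : (1:ℕ∞) ≤ {i : I | x0 ∈ U i}.encard :=
      Set.one_le_encard_iff_nonempty.2 ⟨i0, hx0⟩
    exact_mod_cast h1.trans (hN x0)
  set k : ℝ≥0∞ := ENNReal.ofReal Cm with hk
  have hk0 : k ≠ 0 := by
    simp [hk, ENNReal.ofReal_eq_zero, not_le]; linarith
  have hktop : k ≠ ∞ := ENNReal.ofReal_ne_top
  refine ⟨min k⁻¹ 1, max (N:ℝ≥0∞) 1, lt_min (ENNReal.inv_pos.2 hktop) one_pos,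
    le_trans (min_le_right _ _) (le_max_right _ _),
    max_lt (ENNReal.natCast_lt_top N) ENNReal.one_lt_top, fun lam => ?_⟩
  set a : I → ℝ≥0∞ := fun i => (‖lam i‖₊ : ℝ≥0∞) with ha
  set W : I → ℝ≥0∞ := fun i => ⨆ x ∈ U i, ENNReal.ofReal (w x) with hW
  set wp : X → ℝ≥0∞ := fun y => ENNReal.ofReal (w y) ^ p with hwp
  have hwpm : Measurable wp := hwm.ennreal_ofReal.pow_const p
  set χ : I → X → ℝ≥0∞ := fun i => (U i).indicator (fun _ => (1:ℝ≥0∞)) with hχ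
  -- the b_p(i)^p factor
  have hb : ∀ i, (μ (U i) ^ (1/p) * W i) ^ p = μ (U i) * W i ^ p := by
    intro i
    rw [ENNReal.mul_rpow_of_nonneg _ _ hp0.le, ← ENNReal.rpow_mul,
      one_div_mul_cancel hp0', ENNReal.rpow_one]
  set S : ℝ≥0∞ := ∑' i, a i ^ p * (μ (U i) ^ (1/p) * W i) ^ p with hS
  have hSeq : S = ∑' i, a i ^ p * (μ (U i) * W i ^ p) := by
    rw [hS]; exact tsum_congr fun i => by rw [hb i]
  set T : ℝ≥0∞ := ∑' i, a i ^ p * ∫⁻ y in U i, wp y ∂μ with hT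
  set J : ℝ≥0∞ := ∫⁻ y, (∑' i, a i * χ i y) ^ p * wp y ∂μ with hJ
  -- T as an integral
  have hTint : T = ∫⁻ y, (∑' i, a i ^ p * χ i y) * wp y ∂μ := by
    have : ∀ y, (∑' i, a i ^ p * χ i y) * wp y = ∑' i, a i ^ p * (χ i y * wp y) := by
      intro y
      rw [← ENNReal.tsum_mul_right]
      exact tsum_congr fun i => by ring
    have hind : ∀ i y, a i ^ p * (χ i y * wp y) = a i ^ p * (U i).indicator wp y := by
      intro i y
      by_cases h : y ∈ U i <;> simp [hχ, Set.indicator_apply, h]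
    simp only [this, hind]
    rw [lintegral_tsum fun i => ((hwpm.indicator (hUmeas i)).const_mul _).aemeasurable]
    refine tsum_congr fun i => ?_
    rw [lintegral_const_mul _ (hwpm.indicator (hUmeas i)), lintegral_indicator (hUmeas i)]
  -- pointwise: ∑ aᵢᵖ χᵢ ≤ (∑ aᵢ χᵢ)ᵖ
  have hptlow : ∀ y, (∑' i, a i ^ p * χ i y) ≤ (∑' i, a i * χ i y) ^ p := by
    intro y
    have : ∀ i, a i ^ p * χ i y = (a i * χ i y) ^ p := by
      intro i
      by_cases h : y ∈ U i <;>
        simp [hχ, Set.indicator_apply, h, ENNReal.zero_rpow_of_pos hp0]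
    simp only [this]
    exact tsum_rpow_le_rpow_tsum _ hp
  -- counting bound
  have hcount : ∀ y, (∑' i, χ i y) ≤ (N : ℝ≥0∞) := by
    intro y
    rw [ENNReal.tsum_eq_iSup_sum]
    refine iSup_le fun s => ?_
    have : ∑ i ∈ s, χ i y = ((s.filter (fun i => y ∈ U i)).card : ℝ≥0∞) := by
      rw [Finset.card_filter]
      push_cast
      refine Finset.sum_congr rfl fun i _ => ?_
      by_cases h : y ∈ U i <;> simp [hχ, Set.indicator_apply, h]
    rw [this]
    have hsub : ((s.filter (fun i => y ∈ U i) : Finset I) : Set I) ⊆ {i : I | y ∈ U i} := by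
      intro i hi
      simp only [Finset.coe_filter, Set.mem_setOf_eq] at hi ⊢
      exact hi.2
    have hcard : ((s.filter (fun i => y ∈ U i)).card : ℕ∞) ≤ (N : ℕ∞) := by
      rw [← Set.encard_coe_eq_coe_finsetCard]
      exact (Set.encard_mono hsub).trans (hN y)
    exact_mod_cast hcard
  -- pointwise: (∑ aᵢ χᵢ)ᵖ ≤ Nᵖ ∑ aᵢᵖ χᵢ
  have hpthigh : ∀ y, (∑' i, a i * χ i y) ^ p ≤ (N:ℝ≥0∞) ^ p * (∑' i, a i ^ p * χ i y) := by
    intro y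
    set s := ∑' i, a i ^ p * χ i y with hs
    have hterm : ∀ i, a i * χ i y ≤ s ^ (1/p) * χ i y := by
      intro i
      by_cases h : y ∈ U i
      · simp only [hχ, Set.indicator_apply, h, if_true, mul_one]
        have h1 : a i ^ p ≤ s := by
          have h2 : a i ^ p = a i ^ p * χ i y := by simp [hχ, Set.indicator_apply, h]
          rw [hs, h2]
          exact ENNReal.le_tsum i
        have := ENNReal.rpow_le_rpow h1 hq0.le
        rwa [← ENNReal.rpow_mul, mul_one_div_cancel hp0', ENNReal.rpow_one] at this
      · simp [hχ, Set.indicator_apply, h]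
    have hsum : (∑' i, a i * χ i y) ≤ s ^ (1/p) * (N:ℝ≥0∞) := by
      calc (∑' i, a i * χ i y) ≤ ∑' i, s ^ (1/p) * χ i y := ENNReal.tsum_le_tsum hterm
        _ = s ^ (1/p) * ∑' i, χ i y := ENNReal.tsum_mul_left
        _ ≤ s ^ (1/p) * (N:ℝ≥0∞) := mul_le_mul_right (hcount y) _
    calc (∑' i, a i * χ i y) ^ p ≤ (s ^ (1/p) * (N:ℝ≥0∞)) ^ p :=
          ENNReal.rpow_le_rpow hsum hp0.le
      _ = s * (N:ℝ≥0∞) ^ p := by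
          rw [ENNReal.mul_rpow_of_nonneg _ _ hp0.le, ← ENNReal.rpow_mul,
            one_div_mul_cancel hp0', ENNReal.rpow_one]
      _ = (N:ℝ≥0∞) ^ p * s := mul_comm _ _
  -- T ≤ J and J ≤ N^p T
  have hTJ : T ≤ J := by
    rw [hTint, hJ]
    exact lintegral_mono fun y => mul_le_mul_left (hptlow y) _
  have hJT : J ≤ (N:ℝ≥0∞) ^ p * T := by
    rw [hTint, hJ, ← lintegral_const_mul _ ((by
      exact (Measurable.ennreal_tsum fun i =>
        ((measurable_const.indicator (hUmeas i)).const_mul _)).mul hwpm))]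
    refine lintegral_mono fun y => ?_
    calc (∑' i, a i * χ i y) ^ p * wp y
        ≤ ((N:ℝ≥0∞) ^ p * (∑' i, a i ^ p * χ i y)) * wp y :=
          mul_le_mul_left (hpthigh y) _
      _ = (N:ℝ≥0∞) ^ p * ((∑' i, a i ^ p * χ i y) * wp y) := by ring
  -- per-index integral bounds
  have hWup : ∀ i, ∫⁻ y in U i, wp y ∂μ ≤ μ (U i) * W i ^ p := by
    intro i
    calc ∫⁻ y in U i, wp y ∂μ ≤ ∫⁻ _ in U i, W i ^ p ∂μ := by
          refine setLIntegral_mono measurable_const fun y hy => ?_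
          exact ENNReal.rpow_le_rpow (le_biSup (f := fun x => ENNReal.ofReal (w x)) hy) hp0.le
      _ = W i ^ p * μ (U i) := setLIntegral_const _ _
      _ = μ (U i) * W i ^ p := mul_comm _ _
  have hWlow : ∀ i, μ (U i) * W i ^ p ≤ k ^ p * ∫⁻ y in U i, wp y ∂μ := by
    intro i
    have hwy : ∀ y ∈ U i, k⁻¹ * W i ≤ ENNReal.ofReal (w y) := by
      intro y hy
      rw [ENNReal.inv_mul_le_iff hk0 hktop]
      refine iSup_le fun x => iSup_le fun hx => ?_
      rw [hk, ← ENNReal.ofReal_mul (by linarith)]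
      refine ENNReal.ofReal_le_ofReal ?_
      have hle : w x / w y ≤ Cm := le_trans (le_max_left _ _) (hCm i x hx y hy)
      calc w x = (w x / w y) * w y := (div_mul_cancel₀ (w x) (hw y).ne').symm
        _ ≤ Cm * w y := mul_le_mul_of_nonneg_right hle (hw y).le
    have : (k⁻¹ * W i) ^ p * μ (U i) ≤ ∫⁻ y in U i, wp y ∂μ := by
      rw [← setLIntegral_const (U i) ((k⁻¹ * W i) ^ p)]
      refine setLIntegral_mono hwpm fun y hy => ?_
      exact ENNReal.rpow_le_rpow (hwy y hy) hp0.le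
    rw [ENNReal.mul_rpow_of_nonneg _ _ hp0.le, ENNReal.inv_rpow] at this
    have hkp0 : k ^ p ≠ 0 := by
      simp only [ne_eq, ENNReal.rpow_eq_zero_iff, not_or]
      exact ⟨fun h => hk0 h.1, fun h => hktop h.1⟩
    have hkptop : k ^ p ≠ ∞ := by
      simp only [ne_eq, ENNReal.rpow_eq_top_iff, not_or]
      exact ⟨fun h => hk0 h.1, fun h => hktop h.1⟩
    rw [← ENNReal.inv_mul_le_iff hkp0 hkptop]
    calc (k ^ p)⁻¹ * (μ (U i) * W i ^ p) = (k ^ p)⁻¹ * W i ^ p * μ (U i) := by ring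
      _ ≤ ∫⁻ y in U i, wp y ∂μ := this
  -- combine: T ≤ S and S ≤ k^p T
  have hTS : T ≤ S := by
    rw [hT, hSeq]
    exact ENNReal.tsum_le_tsum fun i => mul_le_mul_right (hWup i) _
  have hST : S ≤ k ^ p * T := by
    rw [hSeq, hT, ← ENNReal.tsum_mul_left]
    refine ENNReal.tsum_le_tsum fun i => ?_
    calc a i ^ p * (μ (U i) * W i ^ p) ≤ a i ^ p * (k ^ p * ∫⁻ y in U i, wp y ∂μ) :=
          mul_le_mul_right (hWlow i) _
      _ = k ^ p * (a i ^ p * ∫⁻ y in U i, wp y ∂μ) := by ring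
  constructor
  · -- lower bound
    have h1 : S ^ (1/p) ≤ k * J ^ (1/p) := by
      calc S ^ (1/p) ≤ (k ^ p * J) ^ (1/p) :=
            ENNReal.rpow_le_rpow (hST.trans (mul_le_mul_right hTJ _)) hq0.le
        _ = k * J ^ (1/p) := by
            rw [ENNReal.mul_rpow_of_nonneg _ _ hq0.le, ← ENNReal.rpow_mul,
              mul_one_div_cancel hp0', ENNReal.rpow_one]
    calc min k⁻¹ 1 * S ^ (1/p) ≤ k⁻¹ * (k * J ^ (1/p)) :=
          mul_le_mul' (min_le_left _ _) h1
      _ = (k⁻¹ * k) * J ^ (1/p) := by ring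
      _ = J ^ (1/p) := by rw [ENNReal.inv_mul_cancel hk0 hktop, one_mul]
  · -- upper bound
    calc J ^ (1/p) ≤ ((N:ℝ≥0∞) ^ p * S) ^ (1/p) :=
          ENNReal.rpow_le_rpow (hJT.trans (mul_le_mul_right hTS _)) hq0.le
      _ = (N:ℝ≥0∞) * S ^ (1/p) := by
          rw [ENNReal.mul_rpow_of_nonneg _ _ hq0.le, ← ENNReal.rpow_mul,
            mul_one_div_cancel hp0', ENNReal.rpow_one]
      _ ≤ max (N:ℝ≥0∞) 1 * S ^ (1/p) := mul_le_mul_left (le_max_left _ _) _
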